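/- Let n ≥ 1 be an integer and β ≥ 0 a real number. Let Ω̄ = {−n, −n+2, …, n−2, n} and for m ∈ Ω̄ define w(m) = C(n, (n+m)/2) · exp(β·m²/(2n)), where C denotes the binomial coefficient. Then the sequence of values w(m) over nonnegative m ∈ Ω̄ is unimodal: there exists m* ∈ Ω̄ with 0 ≤ m* ≤ n such that for all m ∈ Ω̄ with 0 ≤ m and m + 2 ≤ m*, w(m) ≤ w(m+2), and for all m ∈ Ω̄ with m* ≤ m ≤ n − 2, w(m+2) ≤ w(m). -/

import Mathlib

open Real Set

private lemma hasDerivAt_L (x : ℝ) (h1 : -1 < x) (h2 : x < 1) :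
    HasDerivAt (fun t : ℝ => Real.log (1+t) - Real.log (1-t)) (2/(1-x^2)) x := by
  have hx1 : (1:ℝ) + x ≠ 0 := by nlinarith
  have hx2 : (1:ℝ) - x ≠ 0 := by nlinarith
  have d1 : HasDerivAt (fun t : ℝ => Real.log (1+t)) ((1+x)⁻¹ * 1) x :=
    (Real.hasDerivAt_log hx1).comp x ((hasDerivAt_id x).const_add 1)
  have d2 : HasDerivAt (fun t : ℝ => Real.log (1-t)) ((1-x)⁻¹ * (-1)) x :=
    (Real.hasDerivAt_log hx2).comp x ((hasDerivAt_id x).const_sub 1)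
  have : HasDerivAt (fun t : ℝ => Real.log (1+t) - Real.log (1-t)) ((1+x)⁻¹ * 1 - (1-x)⁻¹ * (-1)) x := d1.sub d2
  convert this using 1
  have hne : (1:ℝ) - x^2 ≠ 0 := by
    intro h; rcases mul_eq_zero.mp (by nlinarith : (1+x)*(1-x) = 0) with h'|h' <;> [exact hx1 h'; exact hx2 h']
  field_simp
  ring

private lemma lemA {x : ℝ} (h0 : 0 ≤ x) (h1 : x < 1) :
    Real.log (1+x) - Real.log (1-x) ≤ 2*x/(1-x^2) := by
  set g : ℝ → ℝ := fun t => 2*t/(1-t^2) - (Real.log (1+t) - Real.log (1-t)) with hg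
  have hd : ∀ t ∈ Set.Ico (0:ℝ) 1, HasDerivAt g
      ((2*(1-t^2) - 2*t*(-(2*t)))/(1-t^2)^2 - 2/(1-t^2)) t := by
    intro t ht
    have h1t : -1 < t := lt_of_lt_of_le (by norm_num) ht.1
    have h2t : t < 1 := ht.2
    have hne : (1:ℝ) - t^2 ≠ 0 := by nlinarith
    have dq : HasDerivAt (fun t : ℝ => 2*t/(1-t^2))
        ((2*(1-t^2) - 2*t*(-(2*t)))/(1-t^2)^2) t := by
      have dnum : HasDerivAt (fun t : ℝ => 2*t) 2 t := by
        simpa using (hasDerivAt_id t).const_mul 2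
      have dden : HasDerivAt (fun t : ℝ => 1-t^2) (-(2*t)) t := by
        simpa using ((hasDerivAt_pow 2 t)).const_sub 1
      exact dnum.div dden hne
    exact dq.sub (hasDerivAt_L t h1t h2t)
  have hmono : MonotoneOn g (Set.Ico (0:ℝ) 1) := by
    apply monotoneOn_of_deriv_nonneg (convex_Ico 0 1)
    · exact fun t ht => ((hd t ht).continuousAt).continuousWithinAt
    · intro t ht
      rw [interior_Ico] at ht
      exact ((hd t (Ioo_subset_Ico_self ht)).differentiableAt).differentiableWithinAt
    · intro t ht
      rw [interior_Ico] at ht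
      rw [(hd t (Ioo_subset_Ico_self ht)).deriv]
      have h0t : 0 < t := ht.1
      have h1t : t < 1 := ht.2
      have hpos : (0:ℝ) < 1 - t^2 := by nlinarith
      rw [div_sub_div _ _ (by positivity) (ne_of_gt hpos), le_div_iff₀ (by positivity)]
      nlinarith
  have := hmono (left_mem_Ico.mpr one_pos) (⟨h0, h1⟩ : x ∈ Set.Ico (0:ℝ) 1) h0
  simp only [hg] at this
  norm_num at this
  linarith [this]

private lemma lemB {x y : ℝ} (hx : 0 < x) (hxy : x ≤ y) (hy : y < 1)
    (hA : ∀ t : ℝ, 0 ≤ t → t < 1 → Real.log (1+t) - Real.log (1-t) ≤ 2*t/(1-t^2))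
    (hL : ∀ t : ℝ, -1 < t → t < 1 →
      HasDerivAt (fun s : ℝ => Real.log (1+s) - Real.log (1-s)) (2/(1-t^2)) t) :
    y * (Real.log (1+x) - Real.log (1-x)) ≤ x * (Real.log (1+y) - Real.log (1-y)) := by
  set L : ℝ → ℝ := fun t => Real.log (1+t) - Real.log (1-t) with hLdef
  set φ : ℝ → ℝ := fun t => L t / t with hφ
  have hd : ∀ t ∈ Set.Ioo (0:ℝ) 1, HasDerivAt φ ((2/(1-t^2) * t - L t * 1)/t^2) t := by
    intro t ht
    exact (hL t (by linarith [ht.1]) ht.2).div (hasDerivAt_id t) (ne_of_gt ht.1)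
  have hmono : MonotoneOn φ (Set.Ioo (0:ℝ) 1) := by
    apply monotoneOn_of_deriv_nonneg (convex_Ioo 0 1)
    · exact fun t ht => ((hd t ht).continuousAt).continuousWithinAt
    · intro t ht
      rw [interior_Ioo] at ht
      exact ((hd t ht).differentiableAt).differentiableWithinAt
    · intro t ht
      rw [interior_Ioo] at ht
      rw [(hd t ht).deriv]
      have h1 := hA t (le_of_lt ht.1) ht.2
      have : 0 ≤ 2/(1-t^2) * t - L t * 1 := by
        have h2 : 2/(1-t^2) * t = 2*t/(1-t^2) := by ring
        rw [h2, mul_one]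
        linarith
      positivity
  have hx1 : x < 1 := lt_of_le_of_lt hxy hy
  have key := hmono (Set.mem_Ioo.mpr ⟨hx, hx1⟩) (Set.mem_Ioo.mpr ⟨lt_of_lt_of_le hx hxy, hy⟩) hxy
  have hy0 : 0 < y := lt_of_lt_of_le hx hxy
  simp only [hφ] at key
  rw [div_le_div_iff₀ hx hy0] at key
  simp only [hLdef] at key
  linarith [key]

private lemma meanfield_lemC {N β a b : ℝ} (hN : 1 ≤ N) (hβ : 0 ≤ β) (ha : 0 ≤ a)
    (hab : a ≤ b) (hb : b ≤ N - 2)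
    (hB : ∀ x y : ℝ, 0 < x → x ≤ y → y < 1 →
      y * (Real.log (1+x) - Real.log (1-x)) ≤ x * (Real.log (1+y) - Real.log (1-y)))
    (h : (N - a) * Real.exp (2*β*(a+1)/N) ≤ N + a + 2) :
    (N - b) * Real.exp (2*β*(b+1)/N) ≤ N + b + 2 := by
  have hN0 : (0:ℝ) < N := by linarith
  have hNb : 0 < N - b := by linarith
  have hNa : 0 < N - a := by linarith
  have hNa2 : (0:ℝ) < N + a + 2 := by linarith
  have hNb2 : (0:ℝ) < N + b + 2 := by linarith
  have hN1 : (0:ℝ) < N + 1 := by linarith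
  set ca := 2*β*(a+1)/N with hca
  set cb := 2*β*(b+1)/N with hcb
  set La := Real.log (N + a + 2) - Real.log (N - a) with hLa
  set Lb := Real.log (N + b + 2) - Real.log (N - b) with hLb
  have hlog : Real.log (N - a) + ca ≤ Real.log (N + a + 2) := by
    have h1 : Real.log ((N - a) * Real.exp ca) ≤ Real.log (N + a + 2) :=
      Real.log_le_log (by positivity) h
    rwa [Real.log_mul (ne_of_gt hNa) (Real.exp_ne_zero ca), Real.log_exp] at h1
  set x := (a+1)/(N+1) with hxd
  set y := (b+1)/(N+1) with hyd
  have hx0 : 0 < x := by positivity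
  have hxy : x ≤ y := by rw [hxd, hyd]; gcongr
  have hy1 : y < 1 := by rw [hyd, div_lt_one hN1]; linarith
  have key := hB x y hx0 hxy hy1
  have e1x : 1 + x = (N+a+2)/(N+1) := by rw [hxd]; field_simp; ring
  have e2x : 1 - x = (N-a)/(N+1) := by rw [hxd]; field_simp; ring
  have e1y : 1 + y = (N+b+2)/(N+1) := by rw [hyd]; field_simp; ring
  have e2y : 1 - y = (N-b)/(N+1) := by rw [hyd]; field_simp; ring
  rw [e1x, e2x, e1y, e2y,
    Real.log_div (ne_of_gt hNa2) (ne_of_gt hN1),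
    Real.log_div (ne_of_gt hNa) (ne_of_gt hN1),
    Real.log_div (ne_of_gt hNb2) (ne_of_gt hN1),
    Real.log_div (ne_of_gt hNb) (ne_of_gt hN1)] at key
  -- key : y * (La) ≤ x * (Lb)  (after cancelling log (N+1))
  have key' : y * La ≤ x * Lb := by rw [hLa, hLb]; convert key using 2 <;> ring
  have hxN : x*(N+1) = a+1 := by rw [hxd]; field_simp
  have hyN : y*(N+1) = b+1 := by rw [hyd]; field_simp
  have hmain : (b+1)*La ≤ (a+1)*Lb := by
    calc (b+1)*La = (N+1)*(y*La) := by rw [← hyN]; ring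
    _ ≤ (N+1)*(x*Lb) := mul_le_mul_of_nonneg_left key' hN1.le
    _ = (a+1)*Lb := by rw [← hxN]; ring
  have hcaLa : ca ≤ La := by rw [hLa]; linarith
  have hcbLb : cb ≤ Lb := by
    have e : (a+1)*cb = (b+1)*ca := by rw [hca, hcb]; field_simp
    have h1 : (b+1)*ca ≤ (b+1)*La := mul_le_mul_of_nonneg_left hcaLa (by linarith)
    have h2 : (a+1)*cb ≤ (a+1)*Lb := by rw [e]; linarith
    exact le_of_mul_le_mul_left h2 (by linarith)
  have hexp : Real.exp cb ≤ (N+b+2)/(N-b) := by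
    calc Real.exp cb ≤ Real.exp Lb := Real.exp_le_exp.mpr hcbLb
    _ = (N+b+2)/(N-b) := by
        rw [hLb, Real.exp_sub, Real.exp_log hNb2, Real.exp_log hNb]
  calc (N-b) * Real.exp cb ≤ (N-b) * ((N+b+2)/(N-b)) :=
        mul_le_mul_of_nonneg_left hexp hNb.le
  _ = N + b + 2 := by field_simp

private lemma meanfield_step_iff (n : ℕ) (hn : 1 ≤ n) (β : ℝ) (w : ℤ → ℝ)
    (hw : ∀ m : ℤ, w m = (n.choose (((n : ℤ) + m) / 2).toNat : ℝ) *
      Real.exp (β * (m : ℝ) ^ 2 / (2 * n)))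
    (m : ℤ) (hpar : m % 2 = (n : ℤ) % 2) (h0 : 0 ≤ m) (h2 : m ≤ (n : ℤ) - 2) :
    (w (m+2) ≤ w m ↔
      ((n:ℝ) - (m:ℝ)) * Real.exp (2*β*((m:ℝ)+1)/n) ≤ (n:ℝ) + (m:ℝ) + 2) := by
  have hdvd : (2:ℤ) ∣ (n:ℤ) + m := by omega
  set k : ℕ := (((n : ℤ) + m) / 2).toNat with hkd
  have hk : 2 * (k:ℤ) = (n:ℤ) + m := by
    rw [hkd]; omega
  have hk1 : (((n : ℤ) + (m+2)) / 2).toNat = k + 1 := by omega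
  have hkn1 : k + 1 ≤ n := by omega
  have hkn : k ≤ n := by omega
  have hN0 : (0:ℝ) < (n:ℝ) := by exact_mod_cast Nat.pos_of_ne_zero (by omega)
  set C0 : ℝ := (n.choose k : ℝ) with hC0d
  set C1 : ℝ := (n.choose (k+1) : ℝ) with hC1d
  have hC0 : 0 < C0 := by rw [hC0d]; exact_mod_cast Nat.choose_pos hkn
  have hC1 : 0 < C1 := by rw [hC1d]; exact_mod_cast Nat.choose_pos hkn1
  set E := Real.exp (β * (m:ℝ)^2 / (2*n)) with hEd
  set X := Real.exp (2*β*((m:ℝ)+1)/n) with hXd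
  have hE : 0 < E := Real.exp_pos _
  have hX : 0 < X := Real.exp_pos _
  have hwm : w m = C0 * E := by rw [hw m]
  have hwm2 : w (m+2) = C1 * (E * X) := by
    have hcast : ((m+2 : ℤ) : ℝ) = (m:ℝ) + 2 := by push_cast; ring
    have hsum : β * ((m:ℝ)+2)^2 / (2*n) = β * (m:ℝ)^2/(2*n) + 2*β*((m:ℝ)+1)/n := by
      field_simp
      ring
    rw [hw (m+2), hk1, hcast, hsum, Real.exp_add, hC1d, hEd, hXd]
  have hkr : 2 * (k:ℝ) = (n:ℝ) + (m:ℝ) := by exact_mod_cast congrArg (Int.cast : ℤ → ℝ) hk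
  have hid : C1 * ((k:ℝ)+1) = C0 * ((n:ℝ) - (k:ℝ)) := by
    rw [hC0d, hC1d]
    have h' := Nat.choose_succ_right_eq n k
    have h'' : ((n.choose (k+1) : ℝ)) * ((k:ℝ)+1) =
        (n.choose k : ℝ) * (((n - k : ℕ)) : ℝ) := by exact_mod_cast congrArg (Nat.cast : ℕ → ℝ) h'
    rw [h'', Nat.cast_sub hkn]
  have hk1pos : (0:ℝ) < (k:ℝ) + 1 := by positivity
  rw [hwm, hwm2]
  constructor
  · intro h
    have h1 : C1 * X ≤ C0 := by
      have hre : C1 * (E * X) = (C1 * X) * E := by ring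
      rw [hre] at h
      exact le_of_mul_le_mul_right h hE
    have h2 : ((n:ℝ) - (k:ℝ)) * X ≤ (k:ℝ) + 1 := by
      have e1 : C0 * (((n:ℝ) - (k:ℝ)) * X) = (C1 * X) * ((k:ℝ)+1) := by
        linear_combination (-X) * hid
      have e2 : (C1 * X) * ((k:ℝ)+1) ≤ C0 * ((k:ℝ)+1) :=
        mul_le_mul_of_nonneg_right h1 hk1pos.le
      have e3 : C0 * (((n:ℝ) - (k:ℝ)) * X) ≤ C0 * ((k:ℝ)+1) := by rw [e1]; exact e2
      exact le_of_mul_le_mul_left e3 hC0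
    have e4 : ((n:ℝ) - (m:ℝ)) * X = 2 * (((n:ℝ) - (k:ℝ)) * X) := by
      rw [show (n:ℝ) - (m:ℝ) = 2*((n:ℝ) - (k:ℝ)) by linarith]; ring
    rw [e4]; linarith
  · intro h
    have h2 : ((n:ℝ) - (k:ℝ)) * X ≤ (k:ℝ) + 1 := by
      have e4 : ((n:ℝ) - (m:ℝ)) * X = 2 * (((n:ℝ) - (k:ℝ)) * X) := by
        rw [show (n:ℝ) - (m:ℝ) = 2*((n:ℝ) - (k:ℝ)) by linarith]; ring
      rw [e4] at h; linarith
    have h1 : C1 * X ≤ C0 := by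
      have e1 : C0 * (((n:ℝ) - (k:ℝ)) * X) = (C1 * X) * ((k:ℝ)+1) := by
        linear_combination (-X) * hid
      have e2 : C0 * (((n:ℝ) - (k:ℝ)) * X) ≤ C0 * ((k:ℝ)+1) :=
        mul_le_mul_of_nonneg_left h2 hC0.le
      rw [e1] at e2
      exact le_of_mul_le_mul_right e2 hk1pos
    calc C1 * (E * X) = (C1 * X) * E := by ring
    _ ≤ C0 * E := mul_le_mul_of_nonneg_right h1 hE.le

/-- Unimodality of the magnetization pushforward of the mean-field Ising model
at any inverse temperature `β ≥ 0`. -/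
theorem meanFieldIsing_projected_unimodal (n : ℕ) (hn : 1 ≤ n) (β : ℝ) (hβ : 0 ≤ β)
    (w : ℤ → ℝ)
    (hw : ∀ m : ℤ, w m = (n.choose (((n : ℤ) + m) / 2).toNat : ℝ) *
      Real.exp (β * (m : ℝ) ^ 2 / (2 * n))) :
    ∃ mstar : ℤ, 0 ≤ mstar ∧ mstar ≤ (n : ℤ) ∧ mstar % 2 = (n : ℤ) % 2 ∧
      (∀ m : ℤ, m % 2 = (n : ℤ) % 2 → 0 ≤ m → m + 2 ≤ mstar → w m ≤ w (m + 2)) ∧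
      (∀ m : ℤ, m % 2 = (n : ℤ) % 2 → mstar ≤ m → m ≤ (n : ℤ) - 2 → w (m + 2) ≤ w m) := by
  classical
  have hB : ∀ x y : ℝ, 0 < x → x ≤ y → y < 1 →
      y * (Real.log (1+x) - Real.log (1-x)) ≤ x * (Real.log (1+y) - Real.log (1-y)) :=
    fun x y hx hxy hy => lemB hx hxy hy (fun t h0 h1 => lemA h0 h1)
      (fun t h1 h2 => hasDerivAt_L t h1 h2)
  have hNr : (1:ℝ) ≤ (n:ℝ) := by exact_mod_cast hn
  by_cases h : ∃ j : ℕ, ((j:ℤ) % 2 = (n:ℤ) % 2) ∧ ((j:ℤ) ≤ (n:ℤ) - 2) ∧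
      w ((j:ℤ)+2) ≤ w (j:ℤ)
  · obtain ⟨hFpar, hFle, hFstep⟩ := Nat.find_spec h
    set F : ℤ := ((Nat.find h : ℕ) : ℤ) with hFd
    refine ⟨F, Int.ofNat_nonneg _, by omega, hFpar, ?_, ?_⟩
    · intro m hpar h0 hle
      have hmt : ((m.toNat : ℤ)) = m := Int.toNat_of_nonneg h0
      have hmfind : m.toNat < Nat.find h := by omega
      have hnQ := Nat.find_min h hmfind
      rw [hmt] at hnQ
      push_neg at hnQ
      have := hnQ hpar (by omega)
      linarith
    · intro m hpar hge hle
      have hF0 : (0:ℤ) ≤ F := Int.ofNat_nonneg _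
      have hstepF := (meanfield_step_iff n hn β w hw F hFpar hF0 hFle).mp hFstep
      have hb' : ((m:ℤ):ℝ) ≤ (n:ℝ) - 2 := by
        have : ((m:ℤ):ℝ) ≤ (((n:ℤ) - 2 : ℤ) : ℝ) := by exact_mod_cast hle
        push_cast at this
        linarith
      have hreal := meanfield_lemC (a := ((F:ℤ):ℝ)) (b := ((m:ℤ):ℝ)) hNr hβ
        (by exact_mod_cast hF0) (by exact_mod_cast hge) hb' hB hstepF
      exact (meanfield_step_iff n hn β w hw m hpar (le_trans hF0 hge) hle).mpr hreal
  · refine ⟨(n:ℤ), by positivity, le_refl _, rfl, ?_, ?_⟩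
    · intro m hpar h0 hle
      have hmt : ((m.toNat : ℤ)) = m := Int.toNat_of_nonneg h0
      have hnQ := not_exists.mp h m.toNat
      rw [hmt] at hnQ
      push_neg at hnQ
      have := hnQ hpar (by omega)
      linarith
    · intro m _ hge hle
      exfalso; omega
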